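/- Let u ∈ S_n be a separable permutation. Set U = {v ∈ S_n : v ≤_R u} and Q = {w ∈ S_n : for all v ∈ U, ℓ(wv) = ℓ(w) + ℓ(v)}. Then the multiplication map Q × U → S_n, (w, v) ↦ wv, is a bijection (and it is length-additive: ℓ(wv) = ℓ(w) + ℓ(v) for all w ∈ Q, v ∈ U). -/

import Mathlib

namespace SepPaper

/-- Number of inversions of a permutation of `Fin n`, i.e. its Coxeter length. -/
def invLen {n : ℕ} (w : Equiv.Perm (Fin n)) : ℕ :=
  (Finset.univ.filter fun p : Fin n × Fin n => p.1 < p.2 ∧ w p.2 < w p.1).card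

/-- Right weak order. -/
def leR {n : ℕ} (v u : Equiv.Perm (Fin n)) : Prop :=
  invLen v + invLen (v⁻¹ * u) = invLen u

/-- Left weak order. -/
def leL {n : ℕ} (v u : Equiv.Perm (Fin n)) : Prop :=
  invLen v + invLen (u * v⁻¹) = invLen u

instance {n : ℕ} (v u : Equiv.Perm (Fin n)) : Decidable (leR v u) :=
  inferInstanceAs (Decidable (_ = _))

instance {n : ℕ} (v u : Equiv.Perm (Fin n)) : Decidable (leL v u) :=
  inferInstanceAs (Decidable (_ = _))

/-- The permutation 3142 (one-indexed) as a permutation of `Fin 4`. -/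
def perm3142 : Equiv.Perm (Fin 4) :=
  ⟨![2, 0, 3, 1], ![1, 3, 0, 2], by decide, by decide⟩

/-- The permutation 2413 (one-indexed) as a permutation of `Fin 4`. -/
def perm2413 : Equiv.Perm (Fin 4) :=
  ⟨![1, 3, 0, 2], ![2, 0, 3, 1], by decide, by decide⟩

/-- `w` contains the pattern `σ`. -/
def ContainsPattern {n k : ℕ} (w : Equiv.Perm (Fin n)) (σ : Equiv.Perm (Fin k)) : Prop :=
  ∃ f : Fin k → Fin n, StrictMono f ∧ ∀ a b : Fin k, σ a < σ b ↔ w (f a) < w (f b)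

/-- A permutation is separable if it avoids 3142 and 2413. -/
def Separable {n : ℕ} (w : Equiv.Perm (Fin n)) : Prop :=
  ¬ ContainsPattern w perm3142 ∧ ¬ ContainsPattern w perm2413

/-- The longest element `w₀` of `S_n`, `i ↦ n+1-i` (one-indexed). -/
def w0 (n : ℕ) : Equiv.Perm (Fin n) :=
  ⟨Fin.rev, Fin.rev, Fin.rev_rev, Fin.rev_rev⟩



open Finset

section Helpers

variable {n : ℕ}

private lemma split3 {α : Type*} (s : Finset α) (P Q R : α → Prop)
    [DecidablePred P] [DecidablePred Q] [DecidablePred R]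
    (h : ∀ a, P a → (Q a ↔ ¬ R a)) :
    (s.filter fun a => P a ∧ Q a).card + (s.filter fun a => P a ∧ R a).card
      = (s.filter P).card := by
  have key := Finset.card_filter_add_card_filter_not
    (s := s.filter P) (p := fun a => R a)
  rw [filter_filter, filter_filter] at key
  have e1 : (s.filter fun a => P a ∧ Q a) = s.filter fun a => P a ∧ ¬ R a := by
    apply filter_congr
    intro a _
    constructor
    · rintro ⟨hP, hQ⟩; exact ⟨hP, (h a hP).1 hQ⟩
    · rintro ⟨hP, hR⟩; exact ⟨hP, (h a hP).2 hR⟩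
  rw [e1]
  omega

lemma invLen_mul_add (w v : Equiv.Perm (Fin n)) :
    invLen (w * v) + 2 * ((univ.filter fun q : Fin n × Fin n =>
      q.1 < q.2 ∧ w q.2 < w q.1 ∧ v⁻¹ q.2 < v⁻¹ q.1).card) = invLen w + invLen v := by
  classical
  set K := (univ.filter fun q : Fin n × Fin n =>
      q.1 < q.2 ∧ w q.2 < w q.1 ∧ v⁻¹ q.2 < v⁻¹ q.1) with hK
  set S1 := (univ.filter fun p : Fin n × Fin n =>
      (p.1 < p.2 ∧ w (v p.2) < w (v p.1)) ∧ v p.1 < v p.2) with hS1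
  set S2 := (univ.filter fun p : Fin n × Fin n =>
      (p.1 < p.2 ∧ w (v p.2) < w (v p.1)) ∧ v p.2 < v p.1) with hS2
  set T1 := (univ.filter fun q : Fin n × Fin n =>
      (q.1 < q.2 ∧ w q.2 < w q.1) ∧ v⁻¹ q.1 < v⁻¹ q.2) with hT1
  set T2 := (univ.filter fun q : Fin n × Fin n =>
      (q.1 < q.2 ∧ v⁻¹ q.2 < v⁻¹ q.1) ∧ w q.1 < w q.2) with hT2
  -- (a) invLen (w*v) = S1 + S2
  have ha : S1.card + S2.card = invLen (w * v) := by
    have : invLen (w * v) = (univ.filter fun p : Fin n × Fin n =>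
        p.1 < p.2 ∧ w (v p.2) < w (v p.1)).card := rfl
    rw [this]
    apply split3
    intro p hP
    have hne : v p.1 ≠ v p.2 := fun h => (hP.1.ne (v.injective h))
    constructor
    · intro h1 h2; exact absurd h1 (asymm h2)
    · intro h1; exact (lt_or_gt_of_ne hne).resolve_right h1
  -- (b) S1 = T1
  have hb : S1.card = T1.card := by
    have himg : S1.image (fun p : Fin n × Fin n => (v p.1, v p.2)) = T1 := by
      ext q
      simp only [hS1, hT1, mem_image, mem_filter, mem_univ, true_and]
      constructor
      · rintro ⟨p, ⟨⟨h1, h2⟩, h3⟩, rfl⟩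
        simp only [Equiv.Perm.coe_inv, Equiv.symm_apply_apply]
        exact ⟨⟨h3, h2⟩, h1⟩
      · rintro ⟨⟨h1, h2⟩, h3⟩
        refine ⟨(v⁻¹ q.1, v⁻¹ q.2), ⟨⟨h3, ?_⟩, ?_⟩, ?_⟩
        · simpa using h2
        · simpa using h1
        · simp
    rw [← himg]
    rw [Finset.card_image_of_injOn]
    intro p _ q _ h
    have h1 : v p.1 = v q.1 := congrArg Prod.fst h
    have h2 : v p.2 = v q.2 := congrArg Prod.snd h
    exact Prod.ext (v.injective h1) (v.injective h2)
  -- (c) S2 = T2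
  have hc : S2.card = T2.card := by
    have himg : S2.image (fun p : Fin n × Fin n => (v p.2, v p.1)) = T2 := by
      ext q
      simp only [hS2, hT2, mem_image, mem_filter, mem_univ, true_and]
      constructor
      · rintro ⟨p, ⟨⟨h1, h2⟩, h3⟩, rfl⟩
        simp only [Equiv.Perm.coe_inv, Equiv.symm_apply_apply]
        exact ⟨⟨h3, h1⟩, h2⟩
      · rintro ⟨⟨h1, h2⟩, h3⟩
        refine ⟨(v⁻¹ q.2, v⁻¹ q.1), ⟨⟨h2, ?_⟩, ?_⟩, ?_⟩
        · simpa using h3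
        · simpa using h1
        · simp
    rw [← himg]
    rw [Finset.card_image_of_injOn]
    intro p _ q _ h
    have h1 : v p.2 = v q.2 := congrArg Prod.fst h
    have h2 : v p.1 = v q.1 := congrArg Prod.snd h
    exact Prod.ext (v.injective h2) (v.injective h1)
  -- (d) invLen w = T1 + K
  have hd : T1.card + K.card = invLen w := by
    have hKalt : K = (univ.filter fun q : Fin n × Fin n =>
        (q.1 < q.2 ∧ w q.2 < w q.1) ∧ v⁻¹ q.2 < v⁻¹ q.1) := by
      rw [hK]; apply filter_congr; intro q _; tauto
    rw [hKalt]
    have : invLen w = (univ.filter fun q : Fin n × Fin n =>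
        q.1 < q.2 ∧ w q.2 < w q.1).card := rfl
    rw [this]
    apply split3
    intro q hP
    have hne : v⁻¹ q.1 ≠ v⁻¹ q.2 := fun h => (hP.1.ne (v⁻¹.injective h))
    constructor
    · intro h1 h2; exact absurd h1 (asymm h2)
    · intro h1; exact (lt_or_gt_of_ne hne).resolve_right h1
  -- (e) invLen v = T2 + K
  have he : T2.card + K.card = invLen v := by
    have hbase : invLen v = (univ.filter fun q : Fin n × Fin n =>
        q.1 < q.2 ∧ v⁻¹ q.2 < v⁻¹ q.1).card := by
      have : invLen v = (univ.filter fun p : Fin n × Fin n =>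
          p.1 < p.2 ∧ v p.2 < v p.1).card := rfl
      rw [this]
      have himg : (univ.filter fun p : Fin n × Fin n => p.1 < p.2 ∧ v p.2 < v p.1).image
          (fun p : Fin n × Fin n => (v p.2, v p.1))
          = (univ.filter fun q : Fin n × Fin n => q.1 < q.2 ∧ v⁻¹ q.2 < v⁻¹ q.1) := by
        ext q
        simp only [mem_image, mem_filter, mem_univ, true_and]
        constructor
        · rintro ⟨p, ⟨h1, h2⟩, rfl⟩
          simp only [Equiv.Perm.coe_inv, Equiv.symm_apply_apply]
          exact ⟨h2, h1⟩
        · rintro ⟨h1, h2⟩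
          refine ⟨(v⁻¹ q.2, v⁻¹ q.1), ⟨h2, ?_⟩, ?_⟩
          · simpa using h1
          · simp
      rw [← himg, Finset.card_image_of_injOn]
      intro p _ q _ h
      have h1 : v p.2 = v q.2 := congrArg Prod.fst h
      have h2 : v p.1 = v q.1 := congrArg Prod.snd h
      exact Prod.ext (v.injective h2) (v.injective h1)
    rw [hbase]
    have hKalt : K = (univ.filter fun q : Fin n × Fin n =>
        (q.1 < q.2 ∧ v⁻¹ q.2 < v⁻¹ q.1) ∧ w q.2 < w q.1) := by
      rw [hK]; apply filter_congr; intro q _; tauto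
    rw [hKalt]
    apply split3
    intro q hP
    have hne : w q.1 ≠ w q.2 := fun h => (hP.1.ne (w.injective h))
    constructor
    · intro h1 h2; exact absurd h1 (asymm h2)
    · intro h1; exact (lt_or_gt_of_ne hne).resolve_right h1
  omega

lemma invLen_mul_eq_iff (w v : Equiv.Perm (Fin n)) :
    invLen (w * v) = invLen w + invLen v ↔
      ∀ a b : Fin n, a < b → ¬(w b < w a ∧ v⁻¹ b < v⁻¹ a) := by
  have key := invLen_mul_add w v
  constructor
  · intro he a b hab hcontra
    have hmem : (a, b) ∈ (univ.filter fun q : Fin n × Fin n =>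
        q.1 < q.2 ∧ w q.2 < w q.1 ∧ v⁻¹ q.2 < v⁻¹ q.1) := by
      simp only [mem_filter, mem_univ, true_and]
      exact ⟨hab, hcontra.1, hcontra.2⟩
    have hpos : 0 < (univ.filter fun q : Fin n × Fin n =>
        q.1 < q.2 ∧ w q.2 < w q.1 ∧ v⁻¹ q.2 < v⁻¹ q.1).card :=
      card_pos.2 ⟨_, hmem⟩
    omega
  · intro h
    have hzero : (univ.filter fun q : Fin n × Fin n =>
        q.1 < q.2 ∧ w q.2 < w q.1 ∧ v⁻¹ q.2 < v⁻¹ q.1) = ∅ := by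
      apply filter_eq_empty_iff.2
      rintro q _ ⟨h1, h2, h3⟩
      exact h q.1 q.2 h1 ⟨h2, h3⟩
    rw [hzero] at key
    simpa using key


lemma invLen_one : invLen (1 : Equiv.Perm (Fin n)) = 0 := by
  simp only [invLen]
  rw [Finset.card_eq_zero, Finset.filter_eq_empty_iff]
  rintro p _ ⟨h1, h2⟩
  simp only [Equiv.Perm.one_apply] at h2
  exact absurd h1 (asymm h2)

lemma leR_refl (u : Equiv.Perm (Fin n)) : leR u u := by
  unfold leR
  simp [invLen_one]

lemma leR_iff (v u : Equiv.Perm (Fin n)) :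
    leR v u ↔ ∀ a b : Fin n, a < b → v⁻¹ b < v⁻¹ a → u⁻¹ b < u⁻¹ a := by
  unfold leR
  have hprod : v * (v⁻¹ * u) = u := by group
  have key := invLen_mul_eq_iff v (v⁻¹ * u)
  rw [hprod] at key
  have hinv : ∀ x : Fin n, (v⁻¹ * u)⁻¹ x = u⁻¹ (v x) := by
    intro x; simp [mul_inv_rev, Equiv.Perm.mul_apply]
  rw [eq_comm] at key
  rw [key]
  constructor
  · intro h a b hab hv
    have hc := h (v⁻¹ b) (v⁻¹ a) hv
    rw [hinv, hinv] at hc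
    simp only [Equiv.Perm.coe_inv, Equiv.apply_symm_apply] at hc
    have h2 : ¬ (u⁻¹ a < u⁻¹ b) := fun hlt => hc ⟨hab, hlt⟩
    have hne : u⁻¹ b ≠ u⁻¹ a := fun he => hab.ne (u⁻¹.injective he).symm
    exact lt_of_le_of_ne (not_lt.1 h2) hne
  · rintro h a b hab ⟨h1, h2⟩
    rw [hinv, hinv] at h2
    have := h (v b) (v a) h1 (by simpa using hab)
    exact absurd h2 (asymm this)


/-- Split lemma: if `p` (think: `u⁻¹`) has no 3142/2413 value-quadruple, then every
finite set `A` of at least 2 values splits into a low part and a high part with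
uniform crossing behavior. -/
lemma split_lemma (p : Fin n → Fin n) (hp : Function.Injective p)
    (hquad : ∀ v1 v2 v3 v4 : Fin n, v1 < v2 → v2 < v3 → v3 < v4 →
      ¬(p v3 < p v1 ∧ p v1 < p v4 ∧ p v4 < p v2) ∧
      ¬(p v2 < p v4 ∧ p v4 < p v1 ∧ p v1 < p v3))
    (A : Finset (Fin n)) (h2 : 2 ≤ A.card) :
    ∃ A1 A2 : Finset (Fin n), A1 ∪ A2 = A ∧ A1.Nonempty ∧ A2.Nonempty ∧
      (∀ a ∈ A1, ∀ b ∈ A2, a < b) ∧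
      ((∀ a ∈ A1, ∀ b ∈ A2, p b < p a) ∨ (∀ a ∈ A1, ∀ b ∈ A2, p a < p b)) := by
  classical
  induction A using Finset.strongInduction with
  | _ A IH =>
  have hAne : A.Nonempty := by
    rw [← Finset.card_pos]; omega
  set a := A.max' hAne with hadef
  have haA : a ∈ A := A.max'_mem hAne
  set A' := A.erase a with hA'def
  have hA'card : A'.card = A.card - 1 := Finset.card_erase_of_mem haA
  have hA'lt : ∀ x ∈ A', x < a := by
    intro x hx
    exact lt_of_le_of_ne (A.le_max' x (Finset.mem_of_mem_erase hx))
      (Finset.ne_of_mem_erase hx)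
  have hins : insert a A' = A := Finset.insert_erase haA
  have hanotA' : a ∉ A' := Finset.notMem_erase a A
  by_cases hsmall : A'.card = 1
  · -- base: A = {x, a}
    obtain ⟨x, hxeq⟩ := Finset.card_eq_one.1 hsmall
    have hxA' : x ∈ A' := by rw [hxeq]; exact Finset.mem_singleton_self x
    have hxa : x < a := hA'lt x hxA'
    have hpne : p x ≠ p a := fun h => hxa.ne (hp h)
    refine ⟨{x}, {a}, ?_, ⟨x, Finset.mem_singleton_self x⟩,
      ⟨a, Finset.mem_singleton_self a⟩, ?_, ?_⟩
    · rw [← hins, hxeq]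
      ext z; simp [or_comm]
    · intro b hb c hc
      rw [Finset.mem_singleton] at hb hc
      subst hb; subst hc; exact hxa
    · rcases lt_or_gt_of_ne hpne with h | h
      · right; intro b hb c hc
        rw [Finset.mem_singleton] at hb hc; subst hb; subst hc; exact h
      · left; intro b hb c hc
        rw [Finset.mem_singleton] at hb hc; subst hb; subst hc; exact h
  · -- recursive case
    have hA'2 : 2 ≤ A'.card := by omega
    obtain ⟨B, C, hBC, hBne, hCne, hord, htype⟩ :=
      IH A' (Finset.erase_ssubset haA) hA'2
    have hBA' : ∀ x ∈ B, x ∈ A' := fun x hx => hBC ▸ Finset.mem_union_left C hx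
    have hCA' : ∀ x ∈ C, x ∈ A' := fun x hx => hBC ▸ Finset.mem_union_right B hx
    -- trichotomy helper
    have htri : ∀ x ∈ A', p x < p a ∨ p a < p x := by
      intro x hx
      exact lt_or_gt_of_ne (fun h => (hA'lt x hx).ne (hp h))
    by_cases hall1 : ∀ x ∈ A', p x < p a
    · -- split (A', {a}), all-noninverted
      refine ⟨A', {a}, ?_, ?_, ⟨a, Finset.mem_singleton_self a⟩, ?_, ?_⟩
      · rw [Finset.union_comm, ← Finset.insert_eq, hins]
      · rw [← Finset.card_pos]; omega
      · intro x hx b hb; rw [Finset.mem_singleton] at hb; subst hb; exact hA'lt x hx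
      · right; intro x hx b hb; rw [Finset.mem_singleton] at hb; subst hb
        exact hall1 x hx
    by_cases hall2 : ∀ x ∈ A', p a < p x
    · refine ⟨A', {a}, ?_, ?_, ⟨a, Finset.mem_singleton_self a⟩, ?_, ?_⟩
      · rw [Finset.union_comm, ← Finset.insert_eq, hins]
      · rw [← Finset.card_pos]; omega
      · intro x hx b hb; rw [Finset.mem_singleton] at hb; subst hb; exact hA'lt x hx
      · left; intro x hx b hb; rw [Finset.mem_singleton] at hb; subst hb
        exact hall2 x hx
    -- mixed: get witnesses
    push_neg at hall1 hall2
    obtain ⟨xa, hxaA', hxa⟩ := hall1   -- ¬ p xa < p a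
    obtain ⟨xb, hxbA', hxb⟩ := hall2   -- ¬ p a < p xb
    have hxa' : p a < p xa := hxa.lt_of_ne fun h => (hA'lt xa hxaA').ne' (hp h)
    have hxb' : p xb < p a := hxb.lt_of_ne fun h => (hA'lt xb hxbA').ne (hp h)
    rcases htype with hinv | hnoninv
    · -- B–C all inverted: ∀ b∈B, c∈C, p c < p b
      by_cases hBafter : ∀ x ∈ B, p a < p x
      · -- split (B, insert a C), all inverted
        refine ⟨B, insert a C, ?_, hBne, Finset.insert_nonempty a C, ?_, ?_⟩
        · rw [Finset.union_insert, hBC, hins]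
        · intro b hb c hc
          rcases Finset.mem_insert.1 hc with rfl | hc
          · exact hA'lt b (hBA' b hb)
          · exact hord b hb c hc
        · left; intro b hb c hc
          rcases Finset.mem_insert.1 hc with rfl | hc
          · exact hBafter b hb
          · exact hinv b hb c hc
      · push_neg at hBafter
        obtain ⟨x2, hx2B, hx2⟩ := hBafter
        have hx2' : p x2 < p a := hx2.lt_of_ne fun h => (hA'lt x2 (hBA' x2 hx2B)).ne (hp h)
        -- Aft nonempty: the global after-witness xa must be in B
        have hxaB : xa ∈ B := by
          rcases Finset.mem_union.1 (hBC ▸ hxaA') with h | h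
          · exact h
          · exact absurd (hinv x2 hx2B xa h) (asymm (hx2'.trans hxa'))
        set Aft := B.filter (fun x => p a < p x) with hAft
        have hxaAft : xa ∈ Aft := Finset.mem_filter.2 ⟨hxaB, hxa'⟩
        by_cases hgood : ∀ x' ∈ B, p a < p x' → ∀ x ∈ B, p x < p a → x' < x
        · -- split (Aft, A \ Aft), all inverted
          have hAftA : Aft ⊆ A := by
            intro z hz
            exact Finset.mem_of_mem_erase (hBA' z (Finset.mem_filter.1 hz).1)
          refine ⟨Aft, A \ Aft, ?_, ⟨xa, hxaAft⟩, ⟨a, ?_⟩, ?_, ?_⟩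
          · exact Finset.union_sdiff_of_subset hAftA
          · refine Finset.mem_sdiff.2 ⟨haA, fun h => ?_⟩
            exact hanotA' (hBA' a (Finset.mem_filter.1 h).1)
          · intro x' hx' z hz
            obtain ⟨hx'B, hx'p⟩ := Finset.mem_filter.1 hx'
            obtain ⟨hzA, hzAft⟩ := Finset.mem_sdiff.1 hz
            rcases Finset.mem_insert.1 (hins ▸ hzA) with rfl | hzA'
            · exact hA'lt x' (hBA' x' hx'B)
            rcases Finset.mem_union.1 (hBC ▸ hzA') with hzB | hzC
            · have : ¬ p a < p z := fun h => hzAft (Finset.mem_filter.2 ⟨hzB, h⟩)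
              have hzlt : p z < p a := (htri z hzA').resolve_right this
              exact hgood x' hx'B hx'p z hzB hzlt
            · exact lt_of_lt_of_le (hord x' hx'B z hzC) le_rfl
          · left; intro x' hx' z hz
            obtain ⟨hx'B, hx'p⟩ := Finset.mem_filter.1 hx'
            obtain ⟨hzA, hzAft⟩ := Finset.mem_sdiff.1 hz
            rcases Finset.mem_insert.1 (hins ▸ hzA) with rfl | hzA'
            · exact hx'p
            rcases Finset.mem_union.1 (hBC ▸ hzA') with hzB | hzC
            · have : ¬ p a < p z := fun h => hzAft (Finset.mem_filter.2 ⟨hzB, h⟩)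
              exact ((htri z hzA').resolve_right this).trans hx'p
            · exact hinv x' hx'B z hzC
        · -- forbidden 3142
          push_neg at hgood
          obtain ⟨x', hx'B, hx'p, x, hxB, hxp, hxx'⟩ := hgood
          have hxltx' : x < x' := hxx'.lt_of_ne fun h => (hxp.trans hx'p).ne (congrArg p h)
          obtain ⟨c, hcC⟩ := hCne
          have h1 : x < x' := hxltx'
          have h2 : x' < c := hord x' hx'B c hcC
          have h3 : c < a := hA'lt c (hCA' c hcC)
          exact absurd ⟨hinv x hxB c hcC, hxp, hx'p⟩ ((hquad x x' c a h1 h2 h3).1)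
    · -- B–C all non-inverted: ∀ b∈B, c∈C, p b < p c
      by_cases hBbefore : ∀ x ∈ B, p x < p a
      · refine ⟨B, insert a C, ?_, hBne, Finset.insert_nonempty a C, ?_, ?_⟩
        · rw [Finset.union_insert, hBC, hins]
        · intro b hb c hc
          rcases Finset.mem_insert.1 hc with rfl | hc
          · exact hA'lt b (hBA' b hb)
          · exact hord b hb c hc
        · right; intro b hb c hc
          rcases Finset.mem_insert.1 hc with rfl | hc
          · exact hBbefore b hb
          · exact hnoninv b hb c hc
      · push_neg at hBbefore
        obtain ⟨x1, hx1B, hx1⟩ := hBbefore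
        have hx1' : p a < p x1 := hx1.lt_of_ne fun h => (hA'lt x1 (hBA' x1 hx1B)).ne' (hp h)
        have hxbB : xb ∈ B := by
          rcases Finset.mem_union.1 (hBC ▸ hxbA') with h | h
          · exact h
          · exact absurd (hnoninv x1 hx1B xb h) (asymm (hxb'.trans hx1'))
        set Bef := B.filter (fun x => p x < p a) with hBef
        have hxbBef : xb ∈ Bef := Finset.mem_filter.2 ⟨hxbB, hxb'⟩
        by_cases hgood : ∀ x ∈ B, p x < p a → ∀ x' ∈ B, p a < p x' → x < x'
        · -- split (Bef, A \ Bef), all non-inverted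
          have hBefA : Bef ⊆ A := by
            intro z hz
            exact Finset.mem_of_mem_erase (hBA' z (Finset.mem_filter.1 hz).1)
          refine ⟨Bef, A \ Bef, ?_, ⟨xb, hxbBef⟩, ⟨a, ?_⟩, ?_, ?_⟩
          · exact Finset.union_sdiff_of_subset hBefA
          · refine Finset.mem_sdiff.2 ⟨haA, fun h => ?_⟩
            exact hanotA' (hBA' a (Finset.mem_filter.1 h).1)
          · intro x hx z hz
            obtain ⟨hxB, hxp⟩ := Finset.mem_filter.1 hx
            obtain ⟨hzA, hzBef⟩ := Finset.mem_sdiff.1 hz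
            rcases Finset.mem_insert.1 (hins ▸ hzA) with rfl | hzA'
            · exact hA'lt x (hBA' x hxB)
            rcases Finset.mem_union.1 (hBC ▸ hzA') with hzB | hzC
            · have : ¬ p z < p a := fun h => hzBef (Finset.mem_filter.2 ⟨hzB, h⟩)
              have hzgt : p a < p z := (htri z hzA').resolve_left this
              exact hgood x hxB hxp z hzB hzgt
            · exact hord x hxB z hzC
          · right; intro x hx z hz
            obtain ⟨hxB, hxp⟩ := Finset.mem_filter.1 hx
            obtain ⟨hzA, hzBef⟩ := Finset.mem_sdiff.1 hz
            rcases Finset.mem_insert.1 (hins ▸ hzA) with rfl | hzA'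
            · exact hxp
            rcases Finset.mem_union.1 (hBC ▸ hzA') with hzB | hzC
            · have : ¬ p z < p a := fun h => hzBef (Finset.mem_filter.2 ⟨hzB, h⟩)
              exact hxp.trans ((htri z hzA').resolve_left this)
            · exact hnoninv x hxB z hzC
        · -- forbidden 2413
          push_neg at hgood
          obtain ⟨x, hxB, hxp, x', hx'B, hx'p, hxx'⟩ := hgood
          have hx'ltx : x' < x := hxx'.lt_of_ne fun h => (hxp.trans hx'p).ne' (congrArg p h)
          obtain ⟨c, hcC⟩ := hCne
          have h1 : x' < x := hx'ltx
          have h2 : x < c := hord x hxB c hcC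
          have h3 : c < a := hA'lt c (hCA' c hcC)
          exact absurd ⟨hxp, hx'p, hnoninv x' hx'B c hcC⟩ ((hquad x' x c a h1 h2 h3).2)


lemma exists_bottom (key : Fin n → Fin n) (hkey : Function.Injective key)
    (B : Finset (Fin n)) (k : ℕ) (hk : k ≤ B.card) :
    ∃ B1 : Finset (Fin n), B1 ⊆ B ∧ B1.card = k ∧
      ∀ b1 ∈ B1, ∀ b2 ∈ B \ B1, key b1 < key b2 := by
  classical
  induction k with
  | zero => exact ⟨∅, Finset.empty_subset B, Finset.card_empty, by simp⟩
  | succ k IHk =>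
    obtain ⟨B1, hsub, hcard, hdom⟩ := IHk (by omega)
    have hne : (B \ B1).Nonempty := by
      rw [← Finset.card_pos, Finset.card_sdiff_of_subset hsub]; omega
    obtain ⟨b0, hb0, hmin⟩ := Finset.exists_min_image (B \ B1) key hne
    have hb0B : b0 ∈ B := (Finset.mem_sdiff.1 hb0).1
    have hb0nB1 : b0 ∉ B1 := (Finset.mem_sdiff.1 hb0).2
    refine ⟨insert b0 B1, Finset.insert_subset hb0B hsub,
      by rw [Finset.card_insert_of_notMem hb0nB1, hcard], ?_⟩
    intro b1 hb1 b2 hb2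
    obtain ⟨hb2B, hb2n⟩ := Finset.mem_sdiff.1 hb2
    have hb2nB1 : b2 ∉ B1 := fun h => hb2n (Finset.mem_insert_of_mem h)
    have hb2ne : b2 ≠ b0 := fun h => hb2n (h ▸ Finset.mem_insert_self b0 B1)
    rcases Finset.mem_insert.1 hb1 with rfl | hb1
    · exact lt_of_le_of_ne (hmin b2 (Finset.mem_sdiff.2 ⟨hb2B, hb2nB1⟩))
        (fun h => hb2ne (hkey h.symm))
    · exact hdom b1 hb1 b2 (Finset.mem_sdiff.2 ⟨hb2B, hb2nB1⟩)

lemma bottom_unique (key : Fin n → Fin n) (B B1 C1 : Finset (Fin n))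
    (hB1 : B1 ⊆ B) (hC1 : C1 ⊆ B) (hcard : B1.card = C1.card)
    (hd1 : ∀ b1 ∈ B1, ∀ b2 ∈ B \ B1, key b1 < key b2)
    (hd2 : ∀ b1 ∈ C1, ∀ b2 ∈ B \ C1, key b1 < key b2) : B1 = C1 := by
  by_contra hne
  have h1 : ¬ B1 ⊆ C1 := fun h => hne (Finset.eq_of_subset_of_card_le h (by omega))
  have h2 : ¬ C1 ⊆ B1 := fun h => hne (Finset.eq_of_subset_of_card_le h (by omega)).symm
  obtain ⟨x, hxB1, hxC1⟩ := Finset.not_subset.1 h1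
  obtain ⟨y, hyC1, hyB1⟩ := Finset.not_subset.1 h2
  have k1 := hd1 x hxB1 y (Finset.mem_sdiff.2 ⟨hC1 hyC1, hyB1⟩)
  have k2 := hd2 y hyC1 x (Finset.mem_sdiff.2 ⟨hB1 hxB1, hxC1⟩)
  exact absurd k1 (asymm k2)

/-- Condition for the "sorting" bijection. -/
def Cond (I : Fin n → Fin n → Prop) (y : Fin n → Fin n) (f : Fin n → Fin n)
    (A : Finset (Fin n)) : Prop :=
  ∀ a ∈ A, ∀ b ∈ A, a < b →
    (I a b → f a < f b) ∧ (¬ I a b → y (f a) < y (f b))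

def CoreProp (I : Fin n → Fin n → Prop) (y : Fin n → Fin n)
    (A B : Finset (Fin n)) : Prop :=
  (∃ f : Fin n → Fin n, Set.BijOn f ↑A ↑B ∧ Cond I y f A) ∧
  (∀ f g : Fin n → Fin n, Set.BijOn f ↑A ↑B → Cond I y f A →
    Set.BijOn g ↑A ↑B → Cond I y g A → Set.EqOn f g ↑A)

lemma core_step (I : Fin n → Fin n → Prop) (y : Fin n → Fin n)
    (A B A1 A2 : Finset (Fin n)) (hAB : A.card = B.card)
    (hun : A1 ∪ A2 = A) (h1ne : A1.Nonempty) (h2ne : A2.Nonempty)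
    (hord : ∀ a ∈ A1, ∀ b ∈ A2, a < b)
    (key : Fin n → Fin n) (hkeyinj : Function.Injective key)
    (hforward : ∀ a ∈ A1, ∀ b ∈ A2, ∀ fa fb : Fin n, key fa < key fb →
      ((I a b → fa < fb) ∧ (¬ I a b → y fa < y fb)))
    (hback : ∀ a ∈ A1, ∀ b ∈ A2, ∀ fa fb : Fin n,
      ((I a b → fa < fb) ∧ (¬ I a b → y fa < y fb)) → key fa < key fb)
    (IH : ∀ A' B' : Finset (Fin n), A'.card < A.card → A'.card = B'.card →
      CoreProp I y A' B') :
    CoreProp I y A B := by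
  classical
  have hdisj : Disjoint A1 A2 := by
    rw [Finset.disjoint_left]
    intro x h1 h2
    exact absurd (hord x h1 x h2) (lt_irrefl x)
  have hcards : A1.card + A2.card = A.card := by
    rw [← hun, Finset.card_union_of_disjoint hdisj]
  have hA1A : A1 ⊆ A := hun ▸ Finset.subset_union_left
  have hA2A : A2 ⊆ A := hun ▸ Finset.subset_union_right
  have h1pos : 0 < A1.card := Finset.card_pos.2 h1ne
  have h2pos : 0 < A2.card := Finset.card_pos.2 h2ne
  obtain ⟨B1, hB1sub, hB1card, hB1dom⟩ :=
    exists_bottom key hkeyinj B A1.card (by omega)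
  set B2 := B \ B1 with hB2def
  have hB2card : B2.card = A2.card := by
    rw [hB2def, Finset.card_sdiff_of_subset hB1sub]; omega
  obtain ⟨⟨f1, hf1bij, hf1cond⟩, huniq1⟩ :=
    IH A1 B1 (by omega) (by omega)
  obtain ⟨⟨f2, hf2bij, hf2cond⟩, huniq2⟩ :=
    IH A2 B2 (by omega) (by omega)
  have hnotmem : ∀ x ∈ A2, x ∉ A1 := fun x hx h =>
    absurd (hord x h x hx) (lt_irrefl x)
  set f : Fin n → Fin n := fun x => if x ∈ A1 then f1 x else f2 x with hfdef
  have hfa1 : ∀ x ∈ A1, f x = f1 x := fun x hx => if_pos hx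
  have hfa2 : ∀ x ∈ A2, f x = f2 x := fun x hx => if_neg (hnotmem x hx)
  have hfB1 : ∀ x ∈ A1, f x ∈ B1 := by
    intro x hx; rw [hfa1 x hx]
    exact Finset.mem_coe.1 (hf1bij.mapsTo (Finset.mem_coe.2 hx))
  have hfB2 : ∀ x ∈ A2, f x ∈ B2 := by
    intro x hx; rw [hfa2 x hx]
    exact Finset.mem_coe.1 (hf2bij.mapsTo (Finset.mem_coe.2 hx))
  have hB2notB1 : ∀ b ∈ B2, b ∉ B1 := fun b hb => (Finset.mem_sdiff.1 hb).2
  constructor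
  · -- existence
    refine ⟨f, ⟨?_, ?_, ?_⟩, ?_⟩
    · -- maps to
      intro x hx
      rcases Finset.mem_union.1 (hun ▸ Finset.mem_coe.1 hx) with h | h
      · exact Finset.mem_coe.2 (hB1sub (hfB1 x h))
      · exact Finset.mem_coe.2 ((Finset.sdiff_subset) (hfB2 x h))
    · -- inj on
      intro x hx x' hx' hfe
      rcases Finset.mem_union.1 (hun ▸ Finset.mem_coe.1 hx) with h | h <;>
        rcases Finset.mem_union.1 (hun ▸ Finset.mem_coe.1 hx') with h' | h'
      · rw [hfa1 x h, hfa1 x' h'] at hfe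
        exact hf1bij.injOn (Finset.mem_coe.2 h) (Finset.mem_coe.2 h') hfe
      · exact absurd (hfe ▸ hfB1 x h) (hB2notB1 _ (hfB2 x' h'))
      · exact absurd (hfe ▸ hfB2 x h) (fun hh => hB2notB1 _ hh (hfB1 x' h'))
      · rw [hfa2 x h, hfa2 x' h'] at hfe
        exact hf2bij.injOn (Finset.mem_coe.2 h) (Finset.mem_coe.2 h') hfe
    · -- surj on
      intro b hb
      by_cases hbB1 : b ∈ B1
      · obtain ⟨x, hx, hfx⟩ := hf1bij.surjOn (Finset.mem_coe.2 hbB1)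
        have hxA1 : x ∈ A1 := Finset.mem_coe.1 hx
        exact ⟨x, Finset.mem_coe.2 (hA1A hxA1), by rw [hfa1 x hxA1]; exact hfx⟩
      · have hbB2 : b ∈ B2 := Finset.mem_sdiff.2 ⟨Finset.mem_coe.1 hb, hbB1⟩
        obtain ⟨x, hx, hfx⟩ := hf2bij.surjOn (Finset.mem_coe.2 hbB2)
        have hxA2 : x ∈ A2 := Finset.mem_coe.1 hx
        exact ⟨x, Finset.mem_coe.2 (hA2A hxA2), by rw [hfa2 x hxA2]; exact hfx⟩
    · -- Cond
      intro a ha b hb hab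
      rcases Finset.mem_union.1 (hun ▸ ha) with ha1 | ha2 <;>
        rcases Finset.mem_union.1 (hun ▸ hb) with hb1 | hb2
      · rw [hfa1 a ha1, hfa1 b hb1]
        exact hf1cond a ha1 b hb1 hab
      · exact hforward a ha1 b hb2 (f a) (f b)
          (hB1dom (f a) (hfB1 a ha1) (f b) (hfB2 b hb2))
      · exact absurd (hord b hb1 a ha2) (asymm hab)
      · rw [hfa2 a ha2, hfa2 b hb2]
        exact hf2cond a ha2 b hb2 hab
  · -- uniqueness
    intro g g' hgbij hgcond hg'bij hg'cond
    -- for any solution h, image of A1 is B1 and restrictions are solutions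
    have hrestrict : ∀ h : Fin n → Fin n, Set.BijOn h ↑A ↑B → Cond I y h A →
        Set.BijOn h ↑A1 ↑B1 ∧ Set.BijOn h ↑A2 ↑B2 := by
      intro h hbij hcond
      set C1 := A1.image h with hC1def
      have hC1sub : C1 ⊆ B := by
        intro b hb
        obtain ⟨x, hx, rfl⟩ := Finset.mem_image.1 hb
        exact Finset.mem_coe.1 (hbij.mapsTo (Finset.mem_coe.2 (hA1A hx)))
      have hinjA : Set.InjOn h ↑A1 := hbij.injOn.mono (by
        exact_mod_cast Finset.coe_subset.2 hA1A)
      have hC1card : C1.card = A1.card := Finset.card_image_of_injOn hinjA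
      have hC1dom : ∀ b1 ∈ C1, ∀ b2 ∈ B \ C1, key b1 < key b2 := by
        intro b1 hb1 b2 hb2
        obtain ⟨a1, ha1, rfl⟩ := Finset.mem_image.1 hb1
        obtain ⟨hb2B, hb2nC1⟩ := Finset.mem_sdiff.1 hb2
        obtain ⟨a2, ha2, rfl⟩ := hbij.surjOn (Finset.mem_coe.2 hb2B)
        have ha2A : a2 ∈ A := Finset.mem_coe.1 ha2
        have ha2A2 : a2 ∈ A2 := by
          rcases Finset.mem_union.1 (hun ▸ ha2A) with hh | hh
          · exact absurd (Finset.mem_image_of_mem h hh) hb2nC1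
          · exact hh
        exact hback a1 ha1 a2 ha2A2 (h a1) (h a2)
          (hcond a1 (hA1A ha1) a2 (hA2A ha2A2) (hord a1 ha1 a2 ha2A2))
      have hC1eq : C1 = B1 :=
        bottom_unique key B C1 B1 hC1sub hB1sub (by omega) hC1dom hB1dom
      have himg1 : ∀ x ∈ A1, h x ∈ B1 := by
        intro x hx
        rw [← hC1eq]
        exact Finset.mem_image_of_mem h hx
      have himg2 : ∀ x ∈ A2, h x ∈ B2 := by
        intro x hx
        refine Finset.mem_sdiff.2 ⟨Finset.mem_coe.1 (hbij.mapsTo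
          (Finset.mem_coe.2 (hA2A hx))), fun hmem => ?_⟩
        rw [← hC1eq] at hmem
        obtain ⟨x', hx', hxe⟩ := Finset.mem_image.1 hmem
        have : x' = x := hbij.injOn (Finset.mem_coe.2 (hA1A hx'))
          (Finset.mem_coe.2 (hA2A hx)) hxe
        exact hnotmem x hx (this ▸ hx')
      constructor
      · refine ⟨fun x hx => Finset.mem_coe.2 (himg1 x (Finset.mem_coe.1 hx)),
          hinjA, ?_⟩
        intro b hb
        rw [← hC1eq] at hb
        obtain ⟨x, hx, hxe⟩ := Finset.mem_image.1 (Finset.mem_coe.1 hb)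
        exact ⟨x, Finset.mem_coe.2 hx, hxe⟩
      · refine ⟨fun x hx => Finset.mem_coe.2 (himg2 x (Finset.mem_coe.1 hx)),
          hbij.injOn.mono (by exact_mod_cast Finset.coe_subset.2 hA2A), ?_⟩
        intro b hb
        have hbB : b ∈ B := (Finset.mem_sdiff.1 (Finset.mem_coe.1 hb)).1
        obtain ⟨x, hx, hxe⟩ := hbij.surjOn (Finset.mem_coe.2 hbB)
        have hxA : x ∈ A := Finset.mem_coe.1 hx
        rcases Finset.mem_union.1 (hun ▸ hxA) with hh | hh
        · exact absurd (hxe ▸ himg1 x hh)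
            (hB2notB1 b (Finset.mem_coe.1 hb))
        · exact ⟨x, Finset.mem_coe.2 hh, hxe⟩
    have hcond_restrict : ∀ (h : Fin n → Fin n), Cond I y h A →
        Cond I y h A1 ∧ Cond I y h A2 := by
      intro h hcond
      exact ⟨fun a ha b hb hab => hcond a (hA1A ha) b (hA1A hb) hab,
        fun a ha b hb hab => hcond a (hA2A ha) b (hA2A hb) hab⟩
    obtain ⟨hg1, hg2⟩ := hrestrict g hgbij hgcond
    obtain ⟨hg'1, hg'2⟩ := hrestrict g' hg'bij hg'cond
    obtain ⟨hgc1, hgc2⟩ := hcond_restrict g hgcond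
    obtain ⟨hg'c1, hg'c2⟩ := hcond_restrict g' hg'cond
    have he1 := huniq1 g g' hg1 hgc1 hg'1 hg'c1
    have he2 := huniq2 g g' hg2 hgc2 hg'2 hg'c2
    intro x hx
    rcases Finset.mem_union.1 (hun ▸ Finset.mem_coe.1 hx) with h | h
    · exact he1 (Finset.mem_coe.2 h)
    · exact he2 (Finset.mem_coe.2 h)


lemma core (I : Fin n → Fin n → Prop) (y : Fin n → Fin n)
    (hy : Function.Injective y)
    (hsplitI : ∀ A : Finset (Fin n), 2 ≤ A.card → ∃ A1 A2 : Finset (Fin n),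
      A1 ∪ A2 = A ∧ A1.Nonempty ∧ A2.Nonempty ∧ (∀ a ∈ A1, ∀ b ∈ A2, a < b) ∧
      ((∀ a ∈ A1, ∀ b ∈ A2, I a b) ∨ (∀ a ∈ A1, ∀ b ∈ A2, ¬ I a b)))
    (A B : Finset (Fin n)) (hAB : A.card = B.card) : CoreProp I y A B := by
  classical
  have main : ∀ k (A B : Finset (Fin n)), A.card = k → A.card = B.card →
      CoreProp I y A B := by
    intro k
    induction k using Nat.strong_induction_on with
    | _ k IHk =>
    intro A B hk hAB
    by_cases hc0 : A.card = 0
    · have hA : A = ∅ := Finset.card_eq_zero.1 hc0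
      have hB : B = ∅ := Finset.card_eq_zero.1 (by omega)
      subst hA; subst hB
      constructor
      · refine ⟨id, ?_, ?_⟩
        · simp
        · intro a ha; simp at ha
      · intro f g _ _ _ _ x hx; simp at hx
    by_cases hc1 : A.card = 1
    · obtain ⟨a, hA⟩ := Finset.card_eq_one.1 hc1
      obtain ⟨b, hB⟩ := Finset.card_eq_one.1 (show B.card = 1 by omega)
      subst hA; subst hB
      constructor
      · refine ⟨fun _ => b, ⟨?_, ?_, ?_⟩, ?_⟩
        · intro x _; simp
        · intro x hx x' hx' _
          simp only [Finset.coe_singleton, Set.mem_singleton_iff] at hx hx'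
          rw [hx, hx']
        · intro b' hb'
          simp only [Finset.coe_singleton, Set.mem_singleton_iff] at hb'
          exact ⟨a, by simp, hb'.symm⟩
        · intro x hx x' hx' hlt
          simp only [Finset.mem_singleton] at hx hx'
          subst hx; subst hx'
          exact absurd hlt (lt_irrefl _)
      · intro f g hf _ hg _ x hx
        simp only [Finset.coe_singleton, Set.mem_singleton_iff] at hx
        subst hx
        have h1 := hf.mapsTo (show x ∈ (↑({x} : Finset (Fin n)) : Set (Fin n)) by simp)
        have h2 := hg.mapsTo (show x ∈ (↑({x} : Finset (Fin n)) : Set (Fin n)) by simp)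
        simp only [Finset.coe_singleton, Set.mem_singleton_iff] at h1 h2
        rw [h1, h2]
    · have h2le : 2 ≤ A.card := by omega
      obtain ⟨A1, A2, hun, h1ne, h2ne, hord, htype⟩ := hsplitI A h2le
      have IH' : ∀ A' B' : Finset (Fin n), A'.card < A.card →
          A'.card = B'.card → CoreProp I y A' B' := by
        intro A' B' hlt hcard
        exact IHk A'.card (by omega) A' B' rfl hcard
      rcases htype with hI | hnI
      · refine core_step I y A B A1 A2 hAB hun h1ne h2ne hord id
          Function.injective_id ?_ ?_ IH'
        · intro a ha b hb fa fb hlt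
          exact ⟨fun _ => hlt, fun hn => absurd (hI a ha b hb) hn⟩
        · intro a ha b hb fa fb hpair
          exact hpair.1 (hI a ha b hb)
      · refine core_step I y A B A1 A2 hAB hun h1ne h2ne hord y hy ?_ ?_ IH'
        · intro a ha b hb fa fb hlt
          exact ⟨fun hi => absurd hi (hnI a ha b hb), fun _ => hlt⟩
        · intro a ha b hb fa fb hpair
          exact hpair.2 (hnI a ha b hb)
  exact main A.card A B rfl hAB


lemma strictMono4 (f : Fin 4 → Fin n) (h01 : f 0 < f 1) (h12 : f 1 < f 2)
    (h23 : f 2 < f 3) : StrictMono f := by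
  have h02 := h01.trans h12
  have h13 := h12.trans h23
  have h03 := h02.trans h23
  intro i j hij
  have hi := i.isLt
  have hj := j.isLt
  have hij' : (i : ℕ) < j := hij
  interval_cases hiv : (i : ℕ) <;> interval_cases hjv : (j : ℕ)
  · rw [show i = (0:Fin 4) from Fin.ext (by rw [hiv]; rfl),
      show j = (1:Fin 4) from Fin.ext (by rw [hjv]; rfl)]; exact h01
  · rw [show i = (0:Fin 4) from Fin.ext (by rw [hiv]; rfl),
      show j = (2:Fin 4) from Fin.ext (by rw [hjv]; rfl)]; exact h02
  · rw [show i = (0:Fin 4) from Fin.ext (by rw [hiv]; rfl),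
      show j = (3:Fin 4) from Fin.ext (by rw [hjv]; rfl)]; exact h03
  · rw [show i = (1:Fin 4) from Fin.ext (by rw [hiv]; rfl),
      show j = (2:Fin 4) from Fin.ext (by rw [hjv]; rfl)]; exact h12
  · rw [show i = (1:Fin 4) from Fin.ext (by rw [hiv]; rfl),
      show j = (3:Fin 4) from Fin.ext (by rw [hjv]; rfl)]; exact h13
  · rw [show i = (2:Fin 4) from Fin.ext (by rw [hiv]; rfl),
      show j = (3:Fin 4) from Fin.ext (by rw [hjv]; rfl)]; exact h23

/-- If `w ∘ q ∘ σ⁻¹` is strictly monotone then `q` is an occurrence of `σ` in `w`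
(provided `q` is strictly monotone). -/
lemma contains_of_strictMono {k : ℕ} (w : Equiv.Perm (Fin n)) (σ : Equiv.Perm (Fin k))
    (q : Fin k → Fin n) (hq : StrictMono q)
    (hr : StrictMono (fun i => w (q (σ⁻¹ i)))) :
    ContainsPattern w σ := by
  refine ⟨q, hq, fun a b => ?_⟩
  have ha : w (q a) = (fun i => w (q (σ⁻¹ i))) (σ a) := by simp
  have hb : w (q b) = (fun i => w (q (σ⁻¹ i))) (σ b) := by simp
  rw [ha, hb]
  exact (hr.lt_iff_lt).symm

lemma quad_of_separable (u : Equiv.Perm (Fin n)) (hu : Separable u) :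
    ∀ v1 v2 v3 v4 : Fin n, v1 < v2 → v2 < v3 → v3 < v4 →
      ¬(u⁻¹ v3 < u⁻¹ v1 ∧ u⁻¹ v1 < u⁻¹ v4 ∧ u⁻¹ v4 < u⁻¹ v2) ∧
      ¬(u⁻¹ v2 < u⁻¹ v4 ∧ u⁻¹ v4 < u⁻¹ v1 ∧ u⁻¹ v1 < u⁻¹ v3) := by
  intro v1 v2 v3 v4 h12 h23 h34
  constructor
  · rintro ⟨q1, q2, q3⟩
    apply hu.1
    set q : Fin 4 → Fin n := ![u⁻¹ v3, u⁻¹ v1, u⁻¹ v4, u⁻¹ v2] with hqdef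
    apply contains_of_strictMono u perm3142 q
    · exact strictMono4 q q1 q2 q3
    · apply strictMono4
      · show u (q (perm3142⁻¹ 0)) < u (q (perm3142⁻¹ 1))
        show u (u⁻¹ v1) < u (u⁻¹ v2)
        simpa using h12
      · show u (u⁻¹ v2) < u (u⁻¹ v3)
        simpa using h23
      · show u (u⁻¹ v3) < u (u⁻¹ v4)
        simpa using h34
  · rintro ⟨q1, q2, q3⟩
    apply hu.2
    set q : Fin 4 → Fin n := ![u⁻¹ v2, u⁻¹ v4, u⁻¹ v1, u⁻¹ v3] with hqdef
    apply contains_of_strictMono u perm2413 q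
    · exact strictMono4 q q1 q2 q3
    · apply strictMono4
      · show u (u⁻¹ v1) < u (u⁻¹ v2)
        simpa using h12
      · show u (u⁻¹ v2) < u (u⁻¹ v3)
        simpa using h23
      · show u (u⁻¹ v3) < u (u⁻¹ v4)
        simpa using h34


end Helpers

/-- For `u` a separable permutation, with `U = {v : v ≤_R u}` and
`Q = {w : ∀ v ∈ U, ℓ(wv) = ℓ(w) + ℓ(v)}`, the multiplication map `Q × U → S_n`
is a bijection (and it is length-additive). -/
theorem stmt_0 {n : ℕ} (u : Equiv.Perm (Fin n)) (hu : Separable u)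
    (U : Set (Equiv.Perm (Fin n))) (hU : U = {v | leR v u})
    (Q : Set (Equiv.Perm (Fin n)))
    (hQ : Q = {w | ∀ v ∈ U, invLen (w * v) = invLen w + invLen v}) :
    Function.Bijective (fun p : Q × U => (p.1 : Equiv.Perm (Fin n)) * (p.2 : Equiv.Perm (Fin n))) ∧
    ∀ w ∈ Q, ∀ v ∈ U, invLen (w * v) = invLen w + invLen v := by
  classical
  subst hU; subst hQ
  set I : Fin n → Fin n → Prop := fun a b => u⁻¹ b < u⁻¹ a with hIdef
  have hsplitI : ∀ A : Finset (Fin n), 2 ≤ A.card → ∃ A1 A2 : Finset (Fin n),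
      A1 ∪ A2 = A ∧ A1.Nonempty ∧ A2.Nonempty ∧ (∀ a ∈ A1, ∀ b ∈ A2, a < b) ∧
      ((∀ a ∈ A1, ∀ b ∈ A2, I a b) ∨ (∀ a ∈ A1, ∀ b ∈ A2, ¬ I a b)) := by
    intro A hA
    obtain ⟨A1, A2, h1, h2, h3, h4, h5⟩ := split_lemma (⇑u⁻¹) (u⁻¹ : Equiv.Perm (Fin n)).injective
      (quad_of_separable u hu) A hA
    refine ⟨A1, A2, h1, h2, h3, h4, ?_⟩
    rcases h5 with h | h
    · left; exact h
    · right; intro a ha b hb hI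
      exact absurd (show u⁻¹ b < u⁻¹ a from hI) (asymm (h a ha b hb))
  have huU : u ∈ {v | leR v u} := leR_refl u
  -- a permutation w is "I-sorted small→big" iff it is length-additive against all of U
  have hQchar : ∀ w : Equiv.Perm (Fin n),
      w ∈ {w : Equiv.Perm (Fin n) | ∀ v ∈ {v | leR v u},
        invLen (w * v) = invLen w + invLen v} ↔
      (∀ a b : Fin n, a < b → I a b → w a < w b) := by
    intro w
    constructor
    · intro hw a b hab hI
      have h1 := (invLen_mul_eq_iff w u).1 (hw u huU) a b hab
      have hne : w a ≠ w b := fun h => hab.ne (w.injective h)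
      rcases lt_or_gt_of_ne hne with h | h
      · exact h
      · exact absurd ⟨h, hI⟩ h1
    · intro hw v hv
      rw [invLen_mul_eq_iff]
      rintro a b hab ⟨h1, h2⟩
      have hI : I a b := (leR_iff v u).1 hv a b hab h2
      exact absurd (hw a b hab hI) (asymm h1)
  refine ⟨⟨?_, ?_⟩, fun w hw v hv => hw v hv⟩
  · -- injective
    rintro ⟨⟨w1, hw1⟩, ⟨v1, hv1⟩⟩ ⟨⟨w2, hw2⟩, ⟨v2, hv2⟩⟩ heq
    simp only [Subtype.coe_mk] at heq
    set z : Equiv.Perm (Fin n) := w1 * v1 with hzdef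
    have hz2 : z = w2 * v2 := heq
    obtain ⟨_, huniqz⟩ :=
      core I (⇑z⁻¹) (z⁻¹ : Equiv.Perm (Fin n)).injective hsplitI univ univ rfl
    have hsol : ∀ (w v : Equiv.Perm (Fin n)),
        w ∈ {w : Equiv.Perm (Fin n) | ∀ v ∈ {v | leR v u},
          invLen (w * v) = invLen w + invLen v} →
        v ∈ {v : Equiv.Perm (Fin n) | leR v u} → z = w * v →
        Set.BijOn ⇑w ↑(univ : Finset (Fin n)) ↑(univ : Finset (Fin n)) ∧
        Cond I (⇑z⁻¹) ⇑w (univ : Finset (Fin n)) := by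
      intro w v hwQ hvU hzwv
      constructor
      · rw [Finset.coe_univ]
        exact Set.bijOn_univ.2 w.bijective
      · intro a _ b _ hab
        constructor
        · intro hI
          exact (hQchar w).1 hwQ a b hab hI
        · intro hnI
          have hvinv : ∀ x, v⁻¹ x = z⁻¹ (w x) := by
            intro x
            rw [hzwv]
            simp [mul_inv_rev, Equiv.Perm.mul_apply]
          have hvlt : ¬ (v⁻¹ b < v⁻¹ a) := fun h =>
            hnI ((leR_iff v u).1 hvU a b hab h)
          have hne : v⁻¹ a ≠ v⁻¹ b := fun h => hab.ne (v⁻¹.injective h)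
          have := (lt_or_gt_of_ne hne).resolve_right hvlt
          rw [hvinv, hvinv] at this
          exact this
    obtain ⟨hb1, hc1⟩ := hsol w1 v1 hw1 hv1 rfl
    obtain ⟨hb2, hc2⟩ := hsol w2 v2 hw2 hv2 hz2
    have heqon := huniqz ⇑w1 ⇑w2 hb1 hc1 hb2 hc2
    have hw12 : w1 = w2 := by
      apply Equiv.ext
      intro x
      exact heqon (by simp)
    have hv12 : v1 = v2 := by
      have := hz2
      rw [hzdef] at this  -- no-op
      rw [hw12] at this
      exact mul_left_cancel this
    simp only [Prod.mk.injEq, Subtype.mk.injEq]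
    exact ⟨hw12, hv12⟩
  · -- surjective
    intro z
    obtain ⟨⟨f, hfbij, hfcond⟩, _⟩ :=
      core I (⇑z⁻¹) (z⁻¹ : Equiv.Perm (Fin n)).injective hsplitI univ univ rfl
    rw [Finset.coe_univ] at hfbij
    have hfbij' : Function.Bijective f := Set.bijOn_univ.1 hfbij
    set w : Equiv.Perm (Fin n) := Equiv.ofBijective f hfbij' with hwdef
    have hwf : ∀ x, w x = f x := fun x => rfl
    set v : Equiv.Perm (Fin n) := w⁻¹ * z with hvdef
    have hz : w * v = z := by rw [hvdef]; group
    have hvinv : ∀ x, v⁻¹ x = z⁻¹ (w x) := by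
      intro x
      rw [hvdef]
      simp [mul_inv_rev, Equiv.Perm.mul_apply]
    have hcond : ∀ a b : Fin n, a < b →
        (I a b → f a < f b) ∧ (¬ I a b → z⁻¹ (f a) < z⁻¹ (f b)) :=
      fun a b hab => hfcond a (Finset.mem_univ a) b (Finset.mem_univ b) hab
    have hvU : v ∈ {v : Equiv.Perm (Fin n) | leR v u} := by
      rw [Set.mem_setOf_eq, leR_iff]
      intro a b hab hlt
      by_contra hcon
      have h2 := (hcond a b hab).2 hcon
      rw [← hwf a, ← hwf b] at h2
      rw [hvinv, hvinv] at hlt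
      exact absurd h2 (asymm hlt)
    have hwQ : w ∈ {w : Equiv.Perm (Fin n) | ∀ v ∈ {v | leR v u},
        invLen (w * v) = invLen w + invLen v} := by
      rw [hQchar]
      intro a b hab hI
      have := (hcond a b hab).1 hI
      rw [← hwf a, ← hwf b] at this
      exact this
    exact ⟨⟨⟨w, hwQ⟩, ⟨v, hvU⟩⟩, hz⟩

end SepPaper
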